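/- Let θ > 0 be arbitrary and let C, D, γ > 0. Then there is no continuous nonnegative function h : [0, ∞) → ℝ satisfying h(t) ≥ C + D ∫₀ᵗ h(s)^{1+γ} (t−s)^{−θ} ds for all t > 0. (Every nonnegative solution of this renewal inequality blows up in finite time, for any positive exponent θ, not only for (1+γ)θ < 1.) -/

import Mathlib

open MeasureTheory Set

/-- Proposition 2.9 of the paper.
Let `θ > 0` be arbitrary and let `C, D, γ > 0`.  Then there is no continuous
nonnegative function `h : [0, ∞) → ℝ` satisfying the renewal inequality
`h t ≥ C + D ∫₀ᵗ h(s)^(1+γ) (t-s)^(-θ) ds` for all `t > 0`, where the integral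
is the Lebesgue integral of the nonnegative integrand over `(0, t)` (with value
`+∞` allowed). -/
theorem no_global_solution_renewal_inequality_general_theta
    (θ γ C D : ℝ) (hθ : 0 < θ) (hγ : 0 < γ) (hC : 0 < C) (hD : 0 < D) :
    ¬ ∃ h : ℝ → ℝ,
      ContinuousOn h (Set.Ici 0) ∧
      (∀ t ∈ Set.Ici (0 : ℝ), 0 ≤ h t) ∧
      (∀ t : ℝ, 0 < t →
        ENNReal.ofReal C
          + ENNReal.ofReal D *
            ∫⁻ s in Set.Ioo 0 t, ENNReal.ofReal (h s ^ (1 + γ) * (t - s) ^ (-θ))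
          ≤ ENNReal.ofReal (h t)) := by
  rintro ⟨h, -, hnn, hineq⟩
  -- h ≥ C on (0, ∞)
  have hbase : ∀ t : ℝ, 0 < t → C ≤ h t := by
    intro t ht
    have := hineq t ht
    have h1 : ENNReal.ofReal C ≤ ENNReal.ofReal (h t) :=
      le_trans (le_add_right le_rfl) this
    exact (ENNReal.ofReal_le_ofReal_iff (hnn t ht.le)).mp h1
  -- the lower bound on the integral over a window (t-δ, t)
  have hwindow : ∀ M δ t : ℝ, 0 < M → 0 < δ → δ ≤ t →
      (∀ s : ℝ, t - δ < s → s < t → M ≤ h s) →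
      D * M ^ (1 + γ) * δ ^ (-θ) * δ ≤ h t := by
    intro M δ t hM hδ hδt hMs
    have ht : 0 < t := lt_of_lt_of_le hδ hδt
    have key := hineq t ht
    have hKnn : (0:ℝ) ≤ M ^ (1 + γ) * δ ^ (-θ) := by positivity
    have hsub : Ioo (t - δ) t ⊆ Ioo 0 t := fun s hs =>
      ⟨lt_of_le_of_lt (by linarith) hs.1, hs.2⟩
    have hmono : ENNReal.ofReal (M ^ (1 + γ) * δ ^ (-θ)) * ENNReal.ofReal δ
        ≤ ∫⁻ s in Set.Ioo (t - δ) t, ENNReal.ofReal (h s ^ (1 + γ) * (t - s) ^ (-θ)) := by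
      have hpt : ∀ s ∈ Ioo (t - δ) t,
          ENNReal.ofReal (M ^ (1 + γ) * δ ^ (-θ))
            ≤ ENNReal.ofReal (h s ^ (1 + γ) * (t - s) ^ (-θ)) := by
        intro s hs
        apply ENNReal.ofReal_le_ofReal
        have hts : 0 < t - s := sub_pos.mpr hs.2
        have htsδ : t - s ≤ δ := by have := hs.1; linarith
        have h1 : M ^ (1 + γ) ≤ h s ^ (1 + γ) :=
          Real.rpow_le_rpow hM.le (hMs s hs.1 hs.2) (by linarith)
        have h2 : δ ^ (-θ) ≤ (t - s) ^ (-θ) :=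
          Real.rpow_le_rpow_of_nonpos hts htsδ (by linarith)
        exact mul_le_mul h1 h2 (Real.rpow_nonneg hδ.le _) (Real.rpow_nonneg (le_trans hM.le (hMs s hs.1 hs.2)) _)
      calc ENNReal.ofReal (M ^ (1 + γ) * δ ^ (-θ)) * ENNReal.ofReal δ
          = ∫⁻ _ in Set.Ioo (t - δ) t, ENNReal.ofReal (M ^ (1 + γ) * δ ^ (-θ)) := by
            rw [setLIntegral_const, Real.volume_Ioo]
            ring_nf
        _ ≤ _ := by
            refine lintegral_mono_ae ?_
            exact (ae_restrict_iff' measurableSet_Ioo).2 (Filter.Eventually.of_forall hpt)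
    have hI : ENNReal.ofReal (M ^ (1 + γ) * δ ^ (-θ)) * ENNReal.ofReal δ
        ≤ ∫⁻ s in Set.Ioo 0 t, ENNReal.ofReal (h s ^ (1 + γ) * (t - s) ^ (-θ)) :=
      le_trans hmono (lintegral_mono_set hsub)
    have h2 : ENNReal.ofReal D * (ENNReal.ofReal (M ^ (1 + γ) * δ ^ (-θ)) * ENNReal.ofReal δ)
        ≤ ENNReal.ofReal (h t) :=
      le_trans (mul_le_mul_right hI _) (le_trans (le_add_self) key)
    rw [← ENNReal.ofReal_mul hKnn, ← ENNReal.ofReal_mul (by positivity)] at h2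
    have := (ENNReal.ofReal_le_ofReal_iff (hnn t ht.le)).mp h2
    calc D * M ^ (1 + γ) * δ ^ (-θ) * δ = D * (M ^ (1 + γ) * δ ^ (-θ) * δ) := by ring
    _ ≤ h t := this
  rcases le_or_gt 1 θ with hθ1 | hθ1
  · -- case θ ≥ 1 : the integral is infinite at t = 1
    set f : ℝ → ENNReal := fun s => ENNReal.ofReal (h s ^ (1 + γ) * (1 - s) ^ (-θ)) with hf
    set c : ENNReal := ENNReal.ofReal (C ^ (1 + γ) * 2⁻¹) with hc
    have hcpos : 0 < c := by
      rw [hc]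
      exact ENNReal.ofReal_pos.mpr (by positivity)
    set q : ℝ := 2⁻¹ with hq
    -- each shell contributes at least c
    have hshell : ∀ n : ℕ,
        c ≤ ∫⁻ s in Set.Ioo (1 - q ^ n) (1 - q ^ (n+1)), f s := by
      intro n
      have hqn : (0:ℝ) < q ^ n := by positivity
      have hqn1 : q ^ n ≤ 1 := by
        apply pow_le_one₀ <;> norm_num [hq]
      have hpt : ∀ s ∈ Ioo (1 - q ^ n) (1 - q ^ (n+1)),
          ENNReal.ofReal (C ^ (1 + γ) * 2 ^ n) ≤ f s := by
        intro s hs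
        have hs0 : 0 < s := by
          have := hs.1
          have : 1 - q ^ n ≥ 0 := by linarith
          nlinarith [hs.1]
        have hs1 : s < 1 := by
          have := hs.2
          have : (0:ℝ) < q ^ (n+1) := by positivity
          linarith
        have h1s : 0 < 1 - s := by linarith
        have h1sq : 1 - s ≤ q ^ n := by have := hs.1; linarith
        apply ENNReal.ofReal_le_ofReal
        have hbase1 : C ^ (1 + γ) ≤ h s ^ (1 + γ) :=
          Real.rpow_le_rpow hC.le (hbase s hs0) (by linarith)
        have hinv : (q ^ n : ℝ) = ((2:ℝ) ^ n)⁻¹ := by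
          rw [hq, inv_pow]
        have h2n : ((2:ℝ) ^ n) ≤ (q ^ n) ^ (-θ) := by
          rw [hinv, Real.inv_rpow (by positivity), Real.rpow_neg (by positivity), inv_inv]
          calc ((2:ℝ) ^ n) = ((2:ℝ) ^ n) ^ (1:ℝ) := (Real.rpow_one _).symm
          _ ≤ ((2:ℝ) ^ n) ^ θ := Real.rpow_le_rpow_of_exponent_le (one_le_pow₀ (by norm_num)) hθ1
        have h2 : ((2:ℝ) ^ n) ≤ (1 - s) ^ (-θ) :=
          le_trans h2n (Real.rpow_le_rpow_of_nonpos h1s h1sq (by linarith))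
        exact mul_le_mul hbase1 h2 (by positivity)
          (Real.rpow_nonneg (le_trans hC.le (hbase s hs0)) _)
      calc c = ENNReal.ofReal (C ^ (1 + γ) * 2 ^ n) * ENNReal.ofReal (q ^ (n+1)) := by
            rw [hc, ← ENNReal.ofReal_mul (by positivity)]
            have h2q : (2:ℝ) ^ n * q ^ (n+1) = 2⁻¹ := by
              rw [hq, pow_succ, inv_pow, ← mul_assoc, mul_inv_cancel₀ (by positivity)]
              ring
            congr 1
            rw [mul_assoc, h2q]
        _ = ∫⁻ _ in Set.Ioo (1 - q ^ n) (1 - q ^ (n+1)), ENNReal.ofReal (C ^ (1 + γ) * 2 ^ n) := by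
            rw [setLIntegral_const, Real.volume_Ioo]
            congr 1
            congr 1
            ring
        _ ≤ _ := lintegral_mono_ae
            ((ae_restrict_iff' measurableSet_Ioo).2 (Filter.Eventually.of_forall hpt))
    -- partial sums
    have hstep : ∀ N : ℕ, (N : ENNReal) * c ≤ ∫⁻ s in Set.Ioo 0 (1 - q ^ N), f s := by
      intro N
      induction N with
      | zero => simp
      | succ n ih =>
        have hqn : (0:ℝ) < q ^ n := by positivity
        have hqmono : q ^ (n+1) ≤ q ^ n := by
          exact pow_le_pow_of_le_one (by norm_num [hq]) (by norm_num [hq]) (Nat.le_succ n)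
        have hsub : Ioo (0:ℝ) (1 - q ^ n) ∪ Ioo (1 - q ^ n) (1 - q ^ (n+1))
            ⊆ Ioo 0 (1 - q ^ (n+1)) := by
          intro x hx
          rcases hx with hx | hx
          · exact ⟨hx.1, lt_of_lt_of_le hx.2 (by linarith)⟩
          · constructor
            · have hqn1 : q ^ n ≤ 1 := pow_le_one₀ (by norm_num [hq]) (by norm_num [hq])
              have := hx.1; linarith
            · exact hx.2
        have hdisj : Disjoint (Ioo (0:ℝ) (1 - q ^ n)) (Ioo (1 - q ^ n) (1 - q ^ (n+1))) := by
          apply Set.disjoint_left.mpr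
          intro x hx hx'
          exact absurd hx'.1 (not_lt.mpr hx.2.le)
        calc ((n + 1 : ℕ) : ENNReal) * c = (n : ENNReal) * c + c := by
              push_cast; ring
          _ ≤ (∫⁻ s in Set.Ioo (0:ℝ) (1 - q ^ n), f s)
              + ∫⁻ s in Set.Ioo (1 - q ^ n) (1 - q ^ (n+1)), f s :=
              add_le_add ih (hshell n)
          _ = ∫⁻ s in Set.Ioo (0:ℝ) (1 - q ^ n) ∪ Ioo (1 - q ^ n) (1 - q ^ (n+1)), f s :=
              (lintegral_union measurableSet_Ioo hdisj).symm
          _ ≤ _ := lintegral_mono_set hsub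
    have hstep' : ∀ N : ℕ, (N : ENNReal) * c ≤ ∫⁻ s in Set.Ioo (0:ℝ) 1, f s := by
      intro N
      refine le_trans (hstep N) (lintegral_mono_set ?_)
      intro x hx
      exact ⟨hx.1, lt_of_lt_of_le hx.2 (by nlinarith [pow_pos (show (0:ℝ) < q by norm_num [hq]) N])⟩
    -- the inequality at t = 1 forces the integral to be finite
    have key := hineq 1 one_pos
    have hIle : ENNReal.ofReal D * ∫⁻ s in Set.Ioo (0:ℝ) 1, f s ≤ ENNReal.ofReal (h 1) :=
      le_trans le_add_self key
    set K : ENNReal := ENNReal.ofReal (h 1) / ENNReal.ofReal D with hK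
    have hDne : ENNReal.ofReal D ≠ 0 := by
      simp [ENNReal.ofReal_eq_zero, not_le, hD]
    have hIK : ∫⁻ s in Set.Ioo (0:ℝ) 1, f s ≤ K := by
      rw [hK]
      exact ENNReal.le_div_iff_mul_le (Or.inl hDne) (Or.inl ENNReal.ofReal_ne_top) |>.mpr
        (by rwa [mul_comm])
    have hKt : K < ⊤ := ENNReal.div_lt_top ENNReal.ofReal_ne_top hDne
    have hcne : c ≠ ⊤ := by rw [hc]; exact ENNReal.ofReal_ne_top
    have hKc : K / c ≠ ⊤ := ne_of_lt (ENNReal.div_lt_top (ne_of_lt hKt) (ne_of_gt hcpos))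
    obtain ⟨N, hN⟩ := ENNReal.exists_nat_gt hKc
    have hKlt : K < (N : ENNReal) * c := by
      calc K = K / c * c := (ENNReal.div_mul_cancel (ne_of_gt hcpos) hcne).symm
        _ < (N : ENNReal) * c := ENNReal.mul_lt_mul_left (ne_of_gt hcpos) hcne hN
    exact absurd (le_trans (hstep' N) hIK) (not_le.mpr hKlt)
  · -- case θ < 1 : blow-up argument
    have h1θ : (0:ℝ) < 1 - θ := by linarith
    set M : ℕ → ℝ := fun k => 2 ^ k * C with hM
    have hMpos : ∀ k, 0 < M k := fun k => by positivity
    set δ : ℕ → ℝ := fun k => (2 / (D * M k ^ γ)) ^ (1 - θ)⁻¹ with hδdef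
    have hδpos : ∀ k, 0 < δ k := fun k => by
      have := hMpos k; positivity
    have hδpow : ∀ k, δ k ^ (1 - θ) = 2 / (D * M k ^ γ) := fun k => by
      have := hMpos k
      exact Real.rpow_inv_rpow (by positivity) (ne_of_gt h1θ)
    -- key recursion step value
    have hval : ∀ k, D * M k ^ (1 + γ) * (δ k) ^ (-θ) * δ k = M (k + 1) := by
      intro k
      have hMk := hMpos k
      have hδk := hδpos k
      have e1 : (δ k) ^ (-θ) * δ k = δ k ^ (1 - θ) := by
        rw [show (1 : ℝ) - θ = -θ + 1 by ring, Real.rpow_add hδk, Real.rpow_one]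
      have e2 : M k ^ (1 + γ) = M k * M k ^ γ := by
        rw [Real.rpow_add hMk, Real.rpow_one]
      have e3 : M (k + 1) = 2 * M k := by
        simp [hM, pow_succ]; ring
      calc D * M k ^ (1 + γ) * (δ k) ^ (-θ) * δ k
          = (M k * (D * M k ^ γ)) * ((δ k) ^ (-θ) * δ k) := by rw [e2]; ring
        _ = (M k * (D * M k ^ γ)) * (2 / (D * M k ^ γ)) := by rw [e1, hδpow k]
        _ = 2 * M k := by
            field_simp
        _ = M (k + 1) := e3.symm
    -- geometric decay of δ
    set ρ : ℝ := (((2:ℝ) ^ γ)⁻¹) ^ (1 - θ)⁻¹ with hρdef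
    have hρpos : 0 < ρ := by positivity
    have hρlt : ρ < 1 := by
      apply Real.rpow_lt_one (by positivity)
      · rw [inv_lt_one_iff₀]
        right
        exact (Real.one_lt_rpow_iff_of_pos (by norm_num)).mpr (Or.inl ⟨by norm_num, hγ⟩)
      · positivity
    have hδgeom : ∀ k, δ (k + 1) = ρ * δ k := by
      intro k
      have hMk := hMpos k
      have e3 : M (k + 1) = 2 * M k := by simp [hM, pow_succ]; ring
      have : (2 : ℝ) / (D * M (k+1) ^ γ) = (2 / (D * M k ^ γ)) * ((2:ℝ) ^ γ)⁻¹ := by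
        rw [e3, Real.mul_rpow (by norm_num) hMk.le]
        have h2γ : (0:ℝ) < (2:ℝ) ^ γ := by positivity
        field_simp
      rw [hδdef]
      simp only
      rw [this, Real.mul_rpow (by positivity) (by positivity)]
      rw [mul_comm]
    -- partial sums bounded
    set T : ℕ → ℝ := fun k => ∑ j ∈ Finset.range k, δ j with hT
    have hTsucc : ∀ k, T (k + 1) = T k + δ k := fun k => Finset.sum_range_succ δ k
    have hTnn : ∀ k, 0 ≤ T k := fun k => Finset.sum_nonneg fun j _ => (hδpos j).le
    set B : ℝ := δ 0 * (1 - ρ)⁻¹ with hB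
    have hTB : ∀ k, T k + δ k * (1 - ρ)⁻¹ ≤ B := by
      intro k
      induction k with
      | zero => simp [hT, hB]
      | succ n ih =>
        rw [hTsucc, hδgeom]
        have : T n + δ n + ρ * δ n * (1 - ρ)⁻¹ = T n + δ n * (1 - ρ)⁻¹ := by
          have h1ρ : (1:ℝ) - ρ ≠ 0 := by intro hcon; nlinarith
          field_simp
          ring
        linarith [this.le.trans ih]
    have hTb : ∀ k, T k ≤ B := fun k => by
      have := hTB k
      nlinarith [hδpos k, hρlt, inv_nonneg.mpr (by linarith : (0:ℝ) ≤ 1 - ρ)]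
    -- main induction
    have hmain : ∀ k, ∀ t : ℝ, T k < t → M k ≤ h t := by
      intro k
      induction k with
      | zero =>
        intro t ht
        have h0 : T 0 = 0 := by simp [hT]
        rw [h0] at ht
        simpa [hM] using hbase t ht
      | succ n ih =>
        intro t ht
        rw [hTsucc] at ht
        have hδt : δ n ≤ t := le_trans (by linarith [hTnn n]) ht.le
        have := hwindow (M n) (δ n) t (hMpos n) (hδpos n) hδt ?_
        · rw [hval n] at this; exact this
        · intro s hs1 hs2
          exact ih s (by linarith)
    -- contradiction at t = B + 1
    have hBt : ∀ k, T k < B + 1 := fun k => lt_of_le_of_lt (hTb k) (by linarith)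
    obtain ⟨k, hk⟩ := pow_unbounded_of_one_lt (h (B + 1) / C) (by norm_num : (1:ℝ) < 2)
    have := hmain k (B + 1) (hBt k)
    rw [hM] at this
    simp only at this
    have hk2 : h (B + 1) < 2 ^ k * C := by
      rw [div_lt_iff₀ hC] at hk; linarith
    linarith
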